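/- Let Ω = {ω_1, ..., ω_n} be an LF-inducing set, and for each positive integer M define 𝒜(M) = { ∏_{i=1}^n ω_i^{m_i} : m_1, ..., m_n nonnegative integers with ∑_{i=1}^n m_i = M }. If there exists a positive integer K such that 1 ∈ 𝒜(M) for every integer M ≥ K, then the two-sided Mahavier dynamical system (I_{F_Ω}, σ_{F_Ω}) is topologically mixing. -/

import Mathlib

open Set Filter Topology

/-- One-sided Mahavier product of a relation `F` on `X`. -/
def MahavierPlus {X : Type*} (F : Set (X × X)) : Set (ℕ → X) :=
  {x | ∀ n : ℕ, (x n, x (n + 1)) ∈ F}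

/-- Two-sided Mahavier product of a relation `F` on `X`. -/
def MahavierTwo {X : Type*} (F : Set (X × X)) : Set (ℤ → X) :=
  {x | ∀ n : ℤ, (x n, x (n + 1)) ∈ F}

/-- The shift map on the one-sided Mahavier product. -/
def shiftPlus {X : Type*} (F : Set (X × X)) (x : MahavierPlus F) : MahavierPlus F :=
  ⟨fun n => (x : ℕ → X) (n + 1), fun n => x.2 (n + 1)⟩

/-- The shift map on the two-sided Mahavier product. -/
def shiftTwo {X : Type*} (F : Set (X × X)) (x : MahavierTwo F) : MahavierTwo F :=
  ⟨fun n => (x : ℤ → X) (n + 1), fun n => x.2 (n + 1)⟩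

/-- The metric `D(x,y) = sup_{n ≥ 1} d(x_n, y_n)/2^n` on one-sided sequences
(coordinates are indexed from `0` here, so the weight is `2^(n+1)`). -/
noncomputable def DPlus {X : Type*} [PseudoMetricSpace X] (x y : ℕ → X) : ℝ :=
  ⨆ n : ℕ, dist (x n) (y n) / 2 ^ (n + 1)

/-- The metric `D(x,y) = sup_{n ∈ ℤ} d(x_n, y_n)/2^{|n|}` on two-sided sequences. -/
noncomputable def DTwo {X : Type*} [PseudoMetricSpace X] (x y : ℤ → X) : ℝ :=
  ⨆ n : ℤ, dist (x n) (y n) / 2 ^ n.natAbs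

/-- Topological transitivity. -/
def TopTransitive {Y : Type*} [TopologicalSpace Y] (f : Y → Y) : Prop :=
  ∀ U V : Set Y, IsOpen U → IsOpen V → U.Nonempty → V.Nonempty →
    ∃ n : ℕ, (f^[n] '' U ∩ V).Nonempty

/-- Topological mixing. -/
def TopMixing {Y : Type*} [TopologicalSpace Y] (f : Y → Y) : Prop :=
  ∀ U V : Set Y, IsOpen U → IsOpen V → U.Nonempty → V.Nonempty →
    ∃ n₀ : ℕ, ∀ n : ℕ, n₀ ≤ n → (f^[n] '' U ∩ V).Nonempty

/-- The shadowing property for a map `f` with respect to a distance `dY`. -/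
def ShadowingProp {Y : Type*} (dY : Y → Y → ℝ) (f : Y → Y) : Prop :=
  ∀ ε : ℝ, 0 < ε → ∃ δ : ℝ, 0 < δ ∧ ∀ x : ℕ → Y,
    (∀ k : ℕ, dY (f (x k)) (x (k + 1)) < δ) →
    ∃ y : Y, ∀ k : ℕ, dY (f^[k] y) (x k) < ε

/-- The specification property for a map `f` with respect to a distance `dY`. -/
def SpecProp {Y : Type*} (dY : Y → Y → ℝ) (f : Y → Y) : Prop :=
  ∀ ε : ℝ, 0 < ε → ∃ N : ℕ, 0 < N ∧ ∀ n : ℕ, 0 < n →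
    ∀ x : Fin n → Y, ∀ k l : Fin n → ℕ,
      (∀ i, k i ≤ l i) →
      (∀ i j : Fin n, (i : ℕ) + 1 = (j : ℕ) → l i + N ≤ k j) →
      ∃ y : Y, ∀ i : Fin n, ∀ m : ℕ, k i ≤ m → m ≤ l i →
        dY (f^[m] y) (f^[m] (x i)) ≤ ε

/-- The CR-specification property for the one-sided Mahavier product of `F`. -/
def CRSpec {X : Type*} [PseudoMetricSpace X] (F : Set (X × X)) : Prop :=
  ∀ ε : ℝ, 0 < ε → ∃ N : ℕ, 0 < N ∧ ∀ n : ℕ, 0 < n →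
    ∀ x : Fin n → MahavierPlus F, ∀ k l : Fin n → ℕ,
      (∀ i, k i ≤ l i) →
      (∀ i j : Fin n, (i : ℕ) + 1 = (j : ℕ) → l i + N ≤ k j) →
      ∃ y : MahavierPlus F, ∀ i : Fin n, ∀ m : ℕ, k i ≤ m → m ≤ l i →
        dist ((x i : ℕ → X) m) ((y : ℕ → X) m) ≤ ε

/-- The image of a set under a relation. -/
def relImage {X : Type*} (F : Set (X × X)) (A : Set X) : Set X :=
  {y | ∃ a ∈ A, (a, y) ∈ F}

/-- Composition of relations. -/
def relComp {X : Type*} (F G : Set (X × X)) : Set (X × X) :=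
  {p | ∃ z : X, (p.1, z) ∈ F ∧ (z, p.2) ∈ G}

/-- Iterated composition `F^n` of a relation with itself. -/
def relPow {X : Type*} (F : Set (X × X)) : ℕ → Set (X × X)
  | 0 => {p | p.1 = p.2}
  | n + 1 => relComp (relPow F n) F

/-- A finite set `Ω` of positive reals is LF-inducing if it has at least two elements,
all its elements are positive, and it contains elements `ω₁ < 1 < ω₂` that never
connect: `ω₁^k = ω₂^l` (for integers `k, l`) only when `k = l = 0`. -/
def LFInducing (Ω : Finset ℝ) : Prop :=
  2 ≤ Ω.card ∧ (∀ ω ∈ Ω, 0 < ω) ∧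
  ∃ ω₁ ∈ Ω, ∃ ω₂ ∈ Ω, ω₁ < 1 ∧ 1 < ω₂ ∧
    ∀ k l : ℤ, ω₁ ^ k = ω₂ ^ l → k = 0 ∧ l = 0

/-- The relation `F_Ω = {(x,y) ∈ [0,1]² : y = ω·x for some ω ∈ Ω}`. -/
def FOmega (Ω : Finset ℝ) : Set (ℝ × ℝ) :=
  {p | p.1 ∈ Set.Icc (0 : ℝ) 1 ∧ p.2 ∈ Set.Icc (0 : ℝ) 1 ∧ ∃ ω ∈ Ω, p.2 = ω * p.1}

section StmtAux

open Real in
/-- Stepping lemma: a small-|θ| element of the ℕ-semigroup lets us hit any interval (t-η, t]. -/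
private lemma stmt18_step (α β θ : ℝ) (hα : α < 0) (hβ : 0 < β) (η : ℝ) (hη : 0 < η)
    (p₀ q₀ : ℕ) (hrep : (p₀ : ℝ) * α + (q₀ : ℝ) * β = θ)
    (hθ : (0 < θ ∧ θ ≤ η) ∨ (-η ≤ θ ∧ θ < 0)) (t : ℝ) :
    ∃ p q : ℕ, t - η < p * α + q * β ∧ (p : ℝ) * α + q * β ≤ t := by
  rcases hθ with ⟨hθ0, hθη⟩ | ⟨hθη, hθ0⟩
  · obtain ⟨N, hN⟩ := exists_nat_ge ((-t) / (-α))
    have hα0 : (0:ℝ) < -α := by linarith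
    have ht' : 0 ≤ t + N * (-α) := by
      have := (div_le_iff₀ hα0).mp hN
      linarith
    set t' := t + N * (-α) with ht'def
    set k : ℕ := ⌊t' / θ⌋₊ with hk
    have hk1 : (k : ℝ) * θ ≤ t' := by
      rw [hk]
      have := Nat.floor_le (by positivity : 0 ≤ t' / θ)
      calc (⌊t' / θ⌋₊ : ℝ) * θ ≤ (t' / θ) * θ := by nlinarith
        _ = t' := by field_simp
    have hk2 : t' < (k + 1 : ℝ) * θ := by
      have := Nat.lt_floor_add_one (t' / θ)
      calc t' = (t' / θ) * θ := by field_simp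
        _ < (⌊t' / θ⌋₊ + 1) * θ := by nlinarith
    refine ⟨k * p₀ + N, k * q₀, ?_, ?_⟩
    · push_cast
      nlinarith
    · push_cast
      nlinarith
  · obtain ⟨N, hN⟩ := exists_nat_ge (t / β)
    have ht' : t - N * β ≤ 0 := by
      have := (div_le_iff₀ hβ).mp hN
      linarith
    set t' := t - N * β with ht'def
    set k : ℕ := ⌈t' / θ⌉₊ with hk
    have hne : θ ≠ 0 := ne_of_lt hθ0
    have hq : 0 ≤ t' / θ := div_nonneg_of_nonpos ht' (le_of_lt hθ0)
    have heq : (t' / θ) * θ = t' := by field_simp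
    have hk1 : (k : ℝ) * θ ≤ t' := by
      have h1 : t' / θ ≤ (k : ℝ) := Nat.le_ceil _
      nlinarith
    have hk2 : t' - η < (k:ℝ) * θ := by
      have h2 : (k : ℝ) < t' / θ + 1 := Nat.ceil_lt_add_one hq
      nlinarith
    refine ⟨k * p₀, k * q₀ + N, ?_, ?_⟩
    · push_cast
      nlinarith
    · push_cast
      nlinarith

/-- Density of the ℕ-span of `α < 0 < β` with `α, β` rationally independent. -/
private lemma stmt18_dense (α β : ℝ) (hα : α < 0) (hβ : 0 < β)
    (hind : ∀ k l : ℤ, (k : ℝ) * α + (l : ℝ) * β = 0 → k = 0 ∧ l = 0)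
    (t η : ℝ) (hη : 0 < η) :
    ∃ p q : ℕ, t - η < p * α + q * β ∧ (p : ℝ) * α + q * β ≤ t := by
  set S : AddSubgroup ℝ := AddSubgroup.closure {α, β} with hS
  have hdense : Dense (S : Set ℝ) := by
    rcases S.dense_or_cyclic with h | ⟨a, ha⟩
    · exact h
    · exfalso
      have hαS : α ∈ S := AddSubgroup.subset_closure (by simp)
      have hβS : β ∈ S := AddSubgroup.subset_closure (by simp)
      rw [ha, AddSubgroup.mem_closure_singleton] at hαS hβS
      obtain ⟨k, hk⟩ := hαS
      obtain ⟨l, hl⟩ := hβS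
      have hcomb : ((l : ℝ)) * α + ((-k : ℤ) : ℝ) * β = 0 := by
        push_cast
        rw [← hk, ← hl]
        push_cast [zsmul_eq_mul]
        ring
      obtain ⟨h1, h2⟩ := hind l (-k) hcomb
      have hk0 : k = 0 := by omega
      rw [hk0] at hk
      simp at hk
      rw [← hk] at hα
      exact lt_irrefl _ hα
  set η' := min η (min (-α) β) / 2 with hη'
  have hη'pos : 0 < η' := by
    have : 0 < -α := by linarith
    have : 0 < min η (min (-α) β) := by positivity
    positivity
  have hne : (Set.Ioo (0:ℝ) η').Nonempty := ⟨η'/2, by constructor <;> nlinarith⟩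
  obtain ⟨g, hgI, hgS⟩ := dense_iff_inter_open.mp hdense (Set.Ioo 0 η') isOpen_Ioo hne
  have hgS' : g ∈ AddSubgroup.closure ({α, β} : Set ℝ) := hgS
  rw [AddSubgroup.mem_closure_pair] at hgS'
  obtain ⟨k, l, hkl⟩ := hgS'
  have hkl' : (k : ℝ) * α + (l : ℝ) * β = g := by
    rw [← hkl]; push_cast [zsmul_eq_mul]; ring
  have hg0 : 0 < g := hgI.1
  have hgη : g < η' := hgI.2
  have hη'η : η' ≤ η := by
    have h1 : min η (min (-α) β) ≤ η := min_le_left _ _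
    linarith
  have hη'α : η' < -α := by
    have h1 : min η (min (-α) β) ≤ -α := le_trans (min_le_right _ _) (min_le_left _ _)
    linarith
  have hη'β : η' < β := by
    have h1 : min η (min (-α) β) ≤ β := le_trans (min_le_right _ _) (min_le_right _ _)
    linarith
  rcases le_or_gt 0 k with hk0 | hk0 <;> rcases le_or_gt 0 l with hl0 | hl0
  · refine stmt18_step α β g hα hβ η hη k.toNat l.toNat ?_ (Or.inl ⟨hg0, by linarith⟩) t
    have e1 : ((k.toNat : ℕ) : ℝ) = (k : ℝ) := by exact_mod_cast Int.toNat_of_nonneg hk0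
    have e2 : ((l.toNat : ℕ) : ℝ) = (l : ℝ) := by exact_mod_cast Int.toNat_of_nonneg hl0
    rw [e1, e2, hkl']
  · exfalso
    have h1 : (k : ℝ) * α ≤ 0 := mul_nonpos_of_nonneg_of_nonpos (by exact_mod_cast hk0) (le_of_lt hα)
    have h2 : (l : ℝ) * β ≤ -β := by
      have : (l : ℝ) ≤ -1 := by exact_mod_cast (by omega : l ≤ -1)
      nlinarith
    linarith
  · exfalso
    have h1 : (k : ℝ) * α ≥ -α := by
      have : (k : ℝ) ≤ -1 := by exact_mod_cast (by omega : k ≤ -1)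
      nlinarith
    have h2 : 0 ≤ (l : ℝ) * β := mul_nonneg (by exact_mod_cast hl0) (le_of_lt hβ)
    linarith
  · refine stmt18_step α β (-g) hα hβ η hη (-k).toNat (-l).toNat ?_ (Or.inr ⟨by linarith, by linarith⟩) t
    have e1 : (((-k).toNat : ℕ) : ℝ) = -(k : ℝ) := by
      exact_mod_cast Int.toNat_of_nonneg (by omega : (0:ℤ) ≤ -k)
    have e2 : (((-l).toNat : ℕ) : ℝ) = -(l : ℝ) := by
      exact_mod_cast Int.toNat_of_nonneg (by omega : (0:ℤ) ≤ -l)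
    rw [e1, e2]
    linarith [hkl']

private lemma stmt18_prod_le_one (l : List ℝ) (h : ∀ a ∈ l, 0 ≤ a ∧ a ≤ 1) : l.prod ≤ 1 := by
  induction l with
  | nil => simp
  | cons a t ih =>
    simp only [List.prod_cons]
    have ha := h a (by simp)
    have ht : t.prod ≤ 1 := ih fun b hb => h b (by simp [hb])
    have htn : 0 ≤ t.prod := List.prod_nonneg fun b hb => (h b (by simp [hb])).1
    nlinarith [ha.1, ha.2]

private lemma stmt18_one_le_prod (l : List ℝ) (h : ∀ a ∈ l, 1 ≤ a) : 1 ≤ l.prod := by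
  induction l with
  | nil => simp
  | cons a t ih =>
    simp only [List.prod_cons]
    have ha := h a (by simp)
    have ht : 1 ≤ t.prod := ih fun b hb => h b (by simp [hb])
    nlinarith

/-- Prefix products of a sorted positive list are bounded by `max 1 l.prod`. -/
private lemma stmt18_prefix_bound (l : List ℝ) (hpos : ∀ a ∈ l, 0 < a)
    (hsort : l.Pairwise (· ≤ ·)) (i : ℕ) :
    (l.take i).prod ≤ max 1 l.prod := by
  by_cases hall : ∀ a ∈ l.take i, a ≤ 1
  · exact le_max_of_le_left (stmt18_prod_le_one _ fun a ha =>
      ⟨le_of_lt (hpos a (List.mem_of_mem_take ha)), hall a ha⟩)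
  · push_neg at hall
    obtain ⟨a, ha, ha1⟩ := hall
    have hdrop : ∀ b ∈ l.drop i, 1 ≤ b := fun b hb =>
      le_trans (le_of_lt ha1) (hsort.rel_of_mem_take_of_mem_drop ha hb)
    have h1 : 1 ≤ (l.drop i).prod := stmt18_one_le_prod _ hdrop
    have h2 : (l.take i).prod * (l.drop i).prod = l.prod := List.prod_take_mul_prod_drop l i
    have h3 : 0 < (l.take i).prod := List.prod_pos fun a ha => hpos a (List.mem_of_mem_take ha)
    have : (l.take i).prod ≤ l.prod := by nlinarith
    exact le_max_of_le_right this

private lemma stmt18_sorted_flatMap (base : List ℝ) (hs : base.Pairwise (· ≤ ·)) (c : ℝ → ℕ) :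
    (base.flatMap fun ω => List.replicate (c ω) ω).Pairwise (· ≤ ·) := by
  induction base with
  | nil => simp [List.Pairwise]
  | cons a t ih =>
    rw [List.flatMap_cons]
    rw [List.pairwise_append]
    refine ⟨List.pairwise_replicate.mpr (Or.inr le_rfl), ih hs.of_cons, ?_⟩
    intro x hx y hy
    rw [List.eq_of_mem_replicate hx]
    rw [List.mem_flatMap] at hy
    obtain ⟨ω, hω, hy⟩ := hy
    rw [List.eq_of_mem_replicate hy]
    exact (List.pairwise_cons.mp hs).1 ω hω

private lemma stmt18_mem_flatMap (base : List ℝ) (c : ℝ → ℕ) (a : ℝ)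
    (ha : a ∈ base.flatMap fun ω => List.replicate (c ω) ω) : a ∈ base := by
  rw [List.mem_flatMap] at ha
  obtain ⟨ω, hω, ha⟩ := ha
  rw [List.eq_of_mem_replicate ha]
  exact hω

private lemma stmt18_prod_flatMap (base : List ℝ) (c : ℝ → ℕ) :
    (base.flatMap fun ω => List.replicate (c ω) ω).prod = (base.map fun ω => ω ^ c ω).prod := by
  induction base with
  | nil => simp
  | cons a t ih => simp [List.flatMap_cons, List.prod_append, ih, List.prod_replicate]

private lemma stmt18_length_flatMap (base : List ℝ) (c : ℝ → ℕ) :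
    (base.flatMap fun ω => List.replicate (c ω) ω).length = (base.map c).sum := by
  induction base with
  | nil => simp
  | cons a t ih => simp [List.flatMap_cons, ih]

private lemma stmt18_cylinder {F : Set (ℝ × ℝ)} {U : Set (MahavierTwo F)} (hU : IsOpen U)
    {x : MahavierTwo F} (hx : x ∈ U) :
    ∃ R : ℕ, ∃ ε : ℝ, 0 < ε ∧ ∀ z : MahavierTwo F,
      (∀ j : ℤ, j.natAbs ≤ R → |z.val j - x.val j| < ε) → z ∈ U := by
  obtain ⟨W, hWopen, hWU⟩ := isOpen_induced_iff.mp hU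
  have hxW : x.val ∈ W := by rw [← hWU] at hx; exact hx
  obtain ⟨I, u, hIu, hpi⟩ := isOpen_pi_iff.mp hWopen x.val hxW
  have hballs : ∀ i : ℤ, ∃ δ : ℝ, 0 < δ ∧ (i ∈ I → Metric.ball (x.val i) δ ⊆ u i) := by
    intro i
    by_cases hi : i ∈ I
    · obtain ⟨δ, hδpos, hδ⟩ := Metric.isOpen_iff.mp (hIu i hi).1 (x.val i) (hIu i hi).2
      exact ⟨δ, hδpos, fun _ => hδ⟩
    · exact ⟨1, one_pos, fun h => absurd h hi⟩
  choose δ hδpos hδ using hballs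
  rcases I.eq_empty_or_nonempty with hIe | hIne
  · refine ⟨0, 1, one_pos, fun z _ => ?_⟩
    rw [← hWU]
    exact hpi (by simp [hIe])
  · refine ⟨I.sup Int.natAbs, (I.image δ).min' (hIne.image δ), ?_, ?_⟩
    · obtain ⟨i, hi, hieq⟩ := Finset.mem_image.mp ((I.image δ).min'_mem (hIne.image δ))
      rw [← hieq]; exact hδpos i
    · intro z hz
      rw [← hWU]
      refine hpi fun i hi => ?_
      have h1 : |z.val i - x.val i| < (I.image δ).min' (hIne.image δ) :=
        hz i (Finset.le_sup hi)
      have h2 : (I.image δ).min' (hIne.image δ) ≤ δ i :=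
        Finset.min'_le _ _ (Finset.mem_image_of_mem δ hi)
      exact hδ i hi (by rw [Metric.mem_ball, Real.dist_eq]; linarith)

private lemma stmt18_shift_iter {X : Type*} (F : Set (X × X)) (n : ℕ) (z : MahavierTwo F) (j : ℤ) :
    ((shiftTwo F)^[n] z).val j = z.val (j + n) := by
  induction n generalizing z j with
  | zero => simp
  | succ n ih =>
    rw [Function.iterate_succ_apply, ih (shiftTwo F z) j]
    show z.val (j + n + 1) = z.val (j + (n + 1))
    congr 1
    push_cast
    ring

private lemma stmt18_all_zero {Ω : Finset ℝ} (hpos : ∀ ω ∈ Ω, 0 < ω) {x : ℤ → ℝ}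
    (hx : x ∈ MahavierTwo (FOmega Ω)) {j₀ : ℤ} (h0 : x j₀ = 0) (j : ℤ) : x j = 0 := by
  have key : ∀ k : ℕ, x (j₀ + k) = 0 ∧ x (j₀ - k) = 0 := by
    intro k
    induction k with
    | zero => exact ⟨by simpa using h0, by simpa using h0⟩
    | succ k ih =>
      constructor
      · obtain ⟨ω, hω, hstep0⟩ := (hx (j₀ + k)).2.2
        have hstep : x (j₀ + k + 1) = ω * x (j₀ + k) := hstep0
        have he : (j₀ + (k+1:ℕ) : ℤ) = j₀ + k + 1 := by push_cast; ring
        rw [he, hstep, ih.1, mul_zero]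
      · obtain ⟨ω, hω, hstep0⟩ := (hx (j₀ - (k+1:ℕ))).2.2
        have hstep : x (j₀ - (k+1:ℕ) + 1) = ω * x (j₀ - (k+1:ℕ)) := hstep0
        have he : (j₀ - (k+1:ℕ) + 1 : ℤ) = j₀ - k := by push_cast; ring
        rw [he] at hstep
        rw [ih.2] at hstep
        have := (hpos ω hω).ne'
        field_simp at hstep
        rcases mul_eq_zero.mp hstep.symm with h | h
        · exact absurd h this
        · exact h
  rcases le_or_gt j₀ j with h | h
  · have := (key (j - j₀).toNat).1
    rwa [show j₀ + ((j - j₀).toNat : ℤ) = j by omega] at this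
  · have := (key (j₀ - j).toNat).2
    rwa [show j₀ - ((j₀ - j).toNat : ℤ) = j by omega] at this

private lemma stmt18_tent {Ω : Finset ℝ} {ω₁ ω₂ : ℝ} (h1 : ω₁ ∈ Ω) (h2 : ω₂ ∈ Ω)
    (h1p : 0 < ω₁) (h1l : ω₁ < 1) (h2g : 1 < ω₂) {δ : ℝ} (hδ : 0 < δ) (hδ1 : δ ≤ 1) :
    (fun j : ℤ => if j ≤ 0 then δ * ω₂ ^ j else δ * ω₁ ^ j) ∈ MahavierTwo (FOmega Ω) ∧
    ∀ j : ℤ, 0 < (if j ≤ 0 then δ * ω₂ ^ j else δ * ω₁ ^ j) ∧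
      (if j ≤ 0 then δ * ω₂ ^ j else δ * ω₁ ^ j) ≤ δ := by
  have h2p : (0:ℝ) < ω₂ := lt_trans one_pos h2g
  have hbound : ∀ j : ℤ, 0 < (if j ≤ 0 then δ * ω₂ ^ j else δ * ω₁ ^ j) ∧
      (if j ≤ 0 then δ * ω₂ ^ j else δ * ω₁ ^ j) ≤ δ := by
    intro j
    by_cases hj : j ≤ 0 <;> simp only [hj, if_true, if_false]
    · refine ⟨by positivity, ?_⟩
      have : ω₂ ^ j ≤ 1 := zpow_le_one_of_nonpos₀ (le_of_lt h2g) hj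
      nlinarith
    · refine ⟨by positivity, ?_⟩
      have : ω₁ ^ j ≤ 1 := zpow_le_one₀ h1p (le_of_lt h1l) (by omega)
      nlinarith
  refine ⟨?_, hbound⟩
  intro j
  have hIcc : ∀ i : ℤ, (if i ≤ 0 then δ * ω₂ ^ i else δ * ω₁ ^ i) ∈ Set.Icc (0:ℝ) 1 :=
    fun i => ⟨le_of_lt (hbound i).1, le_trans (hbound i).2 hδ1⟩
  refine ⟨hIcc j, hIcc (j+1), ?_⟩
  by_cases hj : j + 1 ≤ 0
  · have hj' : j ≤ 0 := by omega
    refine ⟨ω₂, h2, ?_⟩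
    simp only [hj, hj', if_true]
    rw [zpow_add_one₀ (ne_of_gt h2p)]
    ring
  · refine ⟨ω₁, h1, ?_⟩
    by_cases hj0 : j ≤ 0
    · have hj00 : j = 0 := by omega
      simp only [hj, hj0, if_true, if_false, hj00]
      norm_num
      ring
    · simp only [hj, hj0, if_false]
      rw [zpow_add_one₀ (ne_of_gt h1p)]
      ring

/-- Every nonempty open subset of the two-sided Mahavier product contains a point with
all coordinates positive. -/
private lemma stmt18_pos_point {Ω : Finset ℝ} {ω₁ ω₂ : ℝ} (h1 : ω₁ ∈ Ω) (h2 : ω₂ ∈ Ω)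
    (h1p : 0 < ω₁) (h1l : ω₁ < 1) (h2g : 1 < ω₂) (hpos : ∀ ω ∈ Ω, 0 < ω)
    {U : Set (MahavierTwo (FOmega Ω))} (hU : IsOpen U) (hne : U.Nonempty) :
    ∃ x : MahavierTwo (FOmega Ω), x ∈ U ∧ ∀ j : ℤ, 0 < x.val j := by
  obtain ⟨x, hx⟩ := hne
  by_cases hxp : ∀ j : ℤ, 0 < x.val j
  · exact ⟨x, hx, hxp⟩
  · push_neg at hxp
    obtain ⟨j₀, hj₀⟩ := hxp
    have hx0 : x.val j₀ = 0 := le_antisymm hj₀ ((x.2 j₀).1.1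
)
    have hzero : ∀ j, x.val j = 0 := stmt18_all_zero hpos x.2 hx0
    obtain ⟨R, ε, hε, hcyl⟩ := stmt18_cylinder hU hx
    set δ := min (ε/2) 1 with hδdef
    have hδpos : 0 < δ := by
      apply lt_min_iff.mpr
      exact ⟨by linarith, one_pos⟩
    have hδ1 : δ ≤ 1 := min_le_right _ _
    have hδε : δ < ε := lt_of_le_of_lt (min_le_left _ _) (by linarith)
    obtain ⟨hw, hwb⟩ := stmt18_tent h1 h2 h1p h1l h2g hδpos hδ1
    refine ⟨⟨_, hw⟩, hcyl _ fun j _ => ?_, fun j => (hwb j).1⟩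
    show |(if j ≤ 0 then δ * ω₂ ^ j else δ * ω₁ ^ j) - x.val j| < ε
    rw [hzero j, sub_zero, abs_of_pos (hwb j).1]
    exact lt_of_le_of_lt (hwb j).2 hδε

end StmtAux

set_option maxHeartbeats 1000000

/-- Let `Ω` be an LF-inducing set. If there is `K ≥ 1` such that for
every `M ≥ K` one can write `1 = ∏_{ω ∈ Ω} ω^{m_ω}` with nonnegative integers `m_ω`
summing to `M`, then the two-sided Mahavier system of `F_Ω` is topologically mixing. -/
theorem stmt18 (Ω : Finset ℝ) (hΩ : LFInducing Ω)
    (h : ∃ K : ℕ, 0 < K ∧ ∀ M : ℕ, K ≤ M →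
      ∃ m : ℝ → ℕ, (∑ ω ∈ Ω, m ω) = M ∧ (∏ ω ∈ Ω, ω ^ m ω) = 1) :
    TopMixing (shiftTwo (FOmega Ω)) := by
  classical
  obtain ⟨K, hK, hA⟩ := h
  obtain ⟨-, hpos, ω₁, hω₁Ω, ω₂, hω₂Ω, hω₁lt, hω₂gt, hLF⟩ := hΩ
  have h1p : 0 < ω₁ := hpos ω₁ hω₁Ω
  have h2p : 0 < ω₂ := hpos ω₂ hω₂Ω
  intro U V hUopen hVopen hUne hVne
  obtain ⟨x, hxU, hxpos⟩ := stmt18_pos_point hω₁Ω hω₂Ω h1p hω₁lt hω₂gt hpos hUopen hUne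
  obtain ⟨y, hyV, hypos⟩ := stmt18_pos_point hω₁Ω hω₂Ω h1p hω₁lt hω₂gt hpos hVopen hVne
  obtain ⟨R₁, ε₁, hε₁, hcylU⟩ := stmt18_cylinder hUopen hxU
  obtain ⟨R₂, ε₂, hε₂, hcylV⟩ := stmt18_cylinder hVopen hyV
  have hxIcc : ∀ j : ℤ, x.val j ∈ Set.Icc (0:ℝ) 1 := fun j => (x.2 j).1
  have hyIcc : ∀ j : ℤ, y.val j ∈ Set.Icc (0:ℝ) 1 := fun j => (y.2 j).1
  set R : ℕ := max R₁ R₂ with hR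
  set a : ℝ := x.val R with ha
  set b : ℝ := y.val (-(R:ℤ)) with hb
  have hap : 0 < a := hxpos _
  have hbp : 0 < b := hypos _
  have ha1 : a ≤ 1 := (hxIcc _).2
  have hb1 : b ≤ 1 := (hyIcc _).2
  set α : ℝ := Real.log ω₁ with hαdef
  set β : ℝ := Real.log ω₂ with hβdef
  have hα : α < 0 := Real.log_neg h1p hω₁lt
  have hβ : 0 < β := Real.log_pos hω₂gt
  have hind : ∀ k l : ℤ, (k:ℝ)*α + (l:ℝ)*β = 0 → k = 0 ∧ l = 0 := by
    intro k l hkl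
    have hzp : ω₁ ^ k = ω₂ ^ (-l) := by
      have e1 : ω₁ ^ k = Real.exp ((k:ℝ) * α) := by
        rw [hαdef, ← Real.log_zpow, Real.exp_log (zpow_pos h1p k)]
      have e2 : ω₂ ^ (-l) = Real.exp (((-l : ℤ):ℝ) * β) := by
        rw [hβdef, ← Real.log_zpow, Real.exp_log (zpow_pos h2p (-l))]
      rw [e1, e2]
      congr 1
      push_cast
      linarith
    obtain ⟨hk, hl⟩ := hLF k (-l) hzp
    exact ⟨hk, by omega⟩
  set η : ℝ := min ε₂ 1 / 2 with hηdef
  have hmin2 : 0 < min ε₂ 1 := lt_min hε₂ one_pos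
  have hηpos : 0 < η := by rw [hηdef]; linarith
  have hηε : η < ε₂ := by
    have h1 : min ε₂ 1 ≤ ε₂ := min_le_left _ _
    rw [hηdef]; linarith
  set t : ℝ := Real.log b - Real.log a with htdef
  obtain ⟨p, q, hpq1, hpq2⟩ := stmt18_dense α β hα hβ hind t η hηpos
  refine ⟨2*R + p + q + K, fun n hn => ?_⟩
  set M : ℕ := n - (2*R + p + q) with hMdef
  have hMK : K ≤ M := by omega
  have hnM : n = 2*R + p + q + M := by omega
  obtain ⟨m, hmsum, hmprod⟩ := hA M hMK
  set cnt : ℝ → ℕ := fun ω => m ω + (if ω = ω₁ then p else 0) + (if ω = ω₂ then q else 0)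
    with hcnt
  set base : List ℝ := Ω.sort (· ≤ ·) with hbase
  set L : List ℝ := base.flatMap (fun ω => List.replicate (cnt ω) ω) with hL
  have hbase_perm : List.Perm base Ω.toList := Finset.sort_perm_toList _ _
  have hLmemΩ : ∀ u ∈ L, u ∈ Ω := fun u hu =>
    (Finset.mem_sort (α := ℝ) (· ≤ ·)).mp (stmt18_mem_flatMap _ _ _ hu)
  have hLpos : ∀ u ∈ L, 0 < u := fun u hu => hpos u (hLmemΩ u hu)
  have hLsort : L.Pairwise (· ≤ ·) := stmt18_sorted_flatMap _ (Finset.pairwise_sort _ _) _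
  have hLlen : L.length = M + p + q := by
    rw [hL, stmt18_length_flatMap]
    have e1 : (base.map cnt).sum = (Ω.toList.map cnt).sum := (hbase_perm.map cnt).sum_eq
    rw [e1, Finset.sum_map_toList]
    rw [hcnt]
    rw [Finset.sum_add_distrib, Finset.sum_add_distrib, hmsum,
      Finset.sum_ite_eq' Ω ω₁ (fun _ => p), Finset.sum_ite_eq' Ω ω₂ (fun _ => q),
      if_pos hω₁Ω, if_pos hω₂Ω]
  have hLprod : L.prod = ω₁ ^ p * ω₂ ^ q := by
    rw [hL, stmt18_prod_flatMap]
    have e1 : (base.map fun ω => ω ^ cnt ω).prod = (Ω.toList.map fun ω => ω ^ cnt ω).prod :=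
      (hbase_perm.map _).prod_eq
    rw [e1, Finset.prod_map_toList]
    have expand : ∀ ω ∈ Ω, ω ^ cnt ω
        = ω ^ m ω * ((if ω = ω₁ then ω₁ ^ p else 1) * (if ω = ω₂ then ω₂ ^ q else 1)) := by
      intro ω hω
      rw [hcnt]
      simp only
      rw [pow_add, pow_add, mul_assoc]
      congr 1
      congr 1
      · split_ifs with h
        · rw [h]
        · rw [pow_zero]
      · split_ifs with h
        · rw [h]
        · rw [pow_zero]
    rw [Finset.prod_congr rfl expand, Finset.prod_mul_distrib, hmprod, one_mul,
      Finset.prod_mul_distrib, Finset.prod_ite_eq' Ω ω₁ (fun _ => ω₁ ^ p),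
      Finset.prod_ite_eq' Ω ω₂ (fun _ => ω₂ ^ q), if_pos hω₁Ω, if_pos hω₂Ω]
  set c : ℝ := a * L.prod with hc
  have hLprodpos : 0 < L.prod := List.prod_pos hLpos
  have hcpos : 0 < c := mul_pos hap hLprodpos
  have hlogc : Real.log c = Real.log a + ((p:ℝ)*α + q*β) := by
    rw [hc, Real.log_mul (ne_of_gt hap) (ne_of_gt hLprodpos), hLprod,
      Real.log_mul (pow_ne_zero _ (ne_of_gt h1p)) (pow_ne_zero _ (ne_of_gt h2p)),
      Real.log_pow, Real.log_pow, hαdef, hβdef]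
  have hcb : c ≤ b := by
    have h1 : Real.log c ≤ Real.log b := by
      rw [hlogc]; rw [htdef] at hpq2; linarith
    exact (Real.log_le_log_iff hcpos hbp).mp h1
  have hcb2 : 1 - c/b ≤ η := by
    have h1 : Real.log b - η < Real.log c := by
      rw [hlogc]; rw [htdef] at hpq1; linarith
    have h2 : b * Real.exp (-η) < c := by
      have he : Real.log (b * Real.exp (-η)) = Real.log b - η := by
        rw [Real.log_mul (ne_of_gt hbp) (Real.exp_ne_zero _), Real.log_exp]; ring
      exact (Real.log_lt_log_iff (by positivity) hcpos).mp (by rw [he]; exact h1)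
    have h3 : 1 - η ≤ Real.exp (-η) := by linarith [Real.add_one_le_exp (-η)]
    have h4 : b * (1 - η) < c := by nlinarith
    have h5 : 1 - η ≤ c / b := by rw [le_div_iff₀ hbp]; nlinarith
    linarith
  set P : ℕ → ℝ := fun i => a * (L.take i).prod with hP
  have hPpos : ∀ i, 0 < P i := fun i =>
    mul_pos hap (List.prod_pos fun u hu => hLpos u (List.mem_of_mem_take hu))
  have hc1 : c ≤ 1 := le_trans hcb hb1
  have hP1 : ∀ i, P i ≤ 1 := by
    intro i
    have hpb := stmt18_prefix_bound L hLpos hLsort i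
    rcases max_cases 1 L.prod with ⟨hm, -⟩ | ⟨hm, -⟩
    · rw [hm] at hpb
      have : P i ≤ a * 1 := by rw [hP]; simp only; nlinarith
      linarith
    · rw [hm] at hpb
      have : P i ≤ a * L.prod := by rw [hP]; simp only; nlinarith
      rw [← hc] at this
      linarith
  have h2Rn : 2*R < n := by omega
  set z : ℤ → ℝ := fun j => if j ≤ (R:ℤ) then x.val j
    else if j ≤ (n:ℤ) - R then P (j - R).toNat else (c/b) * y.val (j - n) with hzdef
  have hz1 : ∀ j : ℤ, j ≤ (R:ℤ) → z j = x.val j := by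
    intro j hj
    simp only [hzdef, if_pos hj]
  have hz2 : ∀ j : ℤ, (R:ℤ) ≤ j → j ≤ (n:ℤ) - R → z j = P (j - R).toNat := by
    intro j hj1 hj2
    by_cases hjR : j ≤ (R:ℤ)
    · have hje : j = (R:ℤ) := le_antisymm hjR hj1
      subst hje
      simp only [hzdef, if_pos (le_refl (R:ℤ))]
      rw [show ((R:ℤ) - R).toNat = 0 by omega]
      rw [hP]
      simp only [List.take_zero, List.prod_nil, mul_one]
      rfl
    · simp only [hzdef, if_neg hjR, if_pos hj2]
  have hz3 : ∀ j : ℤ, (n:ℤ) - R ≤ j → z j = (c/b) * y.val (j - n) := by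
    intro j hj
    by_cases hjR : j ≤ (R:ℤ)
    · exfalso; omega
    · by_cases hjm : j ≤ (n:ℤ) - R
      · have hje : j = (n:ℤ) - R := le_antisymm hjm hj
        subst hje
        simp only [hzdef, if_neg hjR, if_pos (le_refl _)]
        have hidx : (((n:ℤ) - R) - R).toNat = L.length := by
          rw [hLlen]; omega
        rw [hidx, hP]
        simp only [List.take_length]
        rw [← hc]
        rw [show ((n:ℤ) - R - n) = -(R:ℤ) by ring, ← hb]
        field_simp
      · simp only [hzdef, if_neg hjR, if_neg hjm]
  have hzIcc : ∀ j : ℤ, z j ∈ Set.Icc (0:ℝ) 1 := by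
    intro j
    by_cases hjR : j ≤ (R:ℤ)
    · rw [hz1 j hjR]; exact hxIcc j
    · by_cases hjm : j ≤ (n:ℤ) - R
      · rw [hz2 j (by omega) hjm]
        exact ⟨le_of_lt (hPpos _), hP1 _⟩
      · rw [hz3 j (by omega)]
        have hcb1 : c/b ≤ 1 := (div_le_one hbp).mpr hcb
        have hy := hyIcc (j - n)
        constructor
        · exact mul_nonneg (div_nonneg (le_of_lt hcpos) (le_of_lt hbp)) hy.1
        · nlinarith [hy.1, hy.2]
  have hzstep : ∀ j : ℤ, ∃ ω ∈ Ω, z (j+1) = ω * z j := by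
    intro j
    by_cases hjR : j < (R:ℤ)
    · obtain ⟨ω, hω, hstep0⟩ := (x.2 j).2.2
      have hstep : x.val (j+1) = ω * x.val j := hstep0
      exact ⟨ω, hω, by rw [hz1 j (by omega), hz1 (j+1) (by omega), hstep]⟩
    · by_cases hjm : j < (n:ℤ) - R
      · have hiT : (j - R).toNat < L.length := by rw [hLlen]; omega
        have e1 : z j = P (j - R).toNat := hz2 j (by omega) (by omega)
        have e2 : z (j+1) = P ((j - R).toNat + 1) := by
          rw [hz2 (j+1) (by omega) (by omega)]
          congr 1
          omega
        refine ⟨L.get ⟨(j - R).toNat, hiT⟩, hLmemΩ _ (L.get_mem _), ?_⟩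
        rw [e1, e2, hP]
        simp only
        rw [List.prod_take_succ L _ hiT]
        simp only [List.get_eq_getElem]
        ring
      · obtain ⟨ω, hω, hstep0⟩ := (y.2 (j - n)).2.2
        have hstep : y.val (j - n + 1) = ω * y.val (j - n) := hstep0
        refine ⟨ω, hω, ?_⟩
        rw [hz3 j (by omega), hz3 (j+1) (by omega)]
        rw [show (j + 1 - n) = (j - n) + 1 by ring, hstep]
        ring
  have hzmem : z ∈ MahavierTwo (FOmega Ω) := fun j => ⟨hzIcc j, hzIcc (j+1), hzstep j⟩
  set Z : MahavierTwo (FOmega Ω) := ⟨z, hzmem⟩ with hZ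
  have hZU : Z ∈ U := by
    apply hcylU
    intro j hj
    have hjR : j ≤ (R:ℤ) := by
      have h1 : j ≤ (j.natAbs : ℤ) := Int.le_natAbs
      have h2 : R₁ ≤ R := le_max_left _ _
      omega
    show |z j - x.val j| < ε₁
    rw [hz1 j hjR, sub_self, abs_zero]
    exact hε₁
  have hZV : (shiftTwo (FOmega Ω))^[n] Z ∈ V := by
    apply hcylV
    intro j hj
    have hjn : (n:ℤ) - R ≤ j + n := by
      have h1 : -j ≤ (j.natAbs : ℤ) := by omega
      have h2 : R₂ ≤ R := le_max_right _ _
      omega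
    rw [stmt18_shift_iter]
    show |z (j + n) - y.val j| < ε₂
    rw [hz3 _ hjn, show (j + n - n) = j by ring]
    have hy := hyIcc j
    have hcb1 : c/b ≤ 1 := (div_le_one hbp).mpr hcb
    have h2 : 0 ≤ 1 - c/b := by linarith
    rw [show (c/b) * y.val j - y.val j = -((1 - c/b) * y.val j) by ring, abs_neg,
      abs_of_nonneg (mul_nonneg h2 hy.1)]
    nlinarith [hy.1, hy.2]
  exact ⟨(shiftTwo (FOmega Ω))^[n] Z, ⟨Z, hZU, rfl⟩, hZV⟩
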